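/- Commutation with the Euler field: for every vector field V : Fin n → Λ on ℝ^{0|n} whose components are all homogeneous of the same Grassmann parity, one has E ∘ V^↑ − V^↑ ∘ E = 0 and E ∘ V_↑ − V_↑ ∘ E = −V_↑ as linear endomorphisms of P. -/

import Mathlib

open TensorProduct

noncomputable section

/-- The Grassmann algebra on `n` odd generators `ξ^α`. -/
abbrev Lam (n : ℕ) : Type := ExteriorAlgebra ℝ (Fin n → ℝ)

/-- The odd coordinate `ξ^α`, i.e. the generator `e_α = ι (Pi.single α 1)`. -/
def gen {n : ℕ} (α : Fin n) : Lam n := ExteriorAlgebra.ι ℝ (Pi.single α 1)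

/-- The odd partial derivative `∂/∂ξ^α`: left contraction with the `α`-th
coordinate functional, the unique antiderivation sending `e_β` to `δ_{αβ}`. -/
def pd {n : ℕ} (α : Fin n) : Lam n →ₗ[ℝ] Lam n :=
  CliffordAlgebra.contractLeft (Q := (0 : QuadraticForm ℝ (Fin n → ℝ))) (LinearMap.proj α)

/-- The algebra of (pseudo)differential forms on `ℝ^{0|n}`:
polynomials in the even fiber coordinates `y^α` with Grassmann coefficients. -/
abbrev Forms (n : ℕ) : Type := MvPolynomial (Fin n) ℝ ⊗[ℝ] Lam n

/-- The de Rham differential `Q = y^α ∂_{ξ^α}`. -/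
def deRham (n : ℕ) : Forms n →ₗ[ℝ] Forms n :=
  ∑ α : Fin n, TensorProduct.map (LinearMap.mulLeft ℝ (MvPolynomial.X α)) (pd α)


/-- The inner product `i_V = V^α ∂_{y^α}` of the vector field `V = V^α ∂_{ξ^α}`. -/
def innerProd {n : ℕ} (V : Fin n → Lam n) : Forms n →ₗ[ℝ] Forms n :=
  ∑ α : Fin n, TensorProduct.map (MvPolynomial.pderiv α).toLinearMap
    (LinearMap.mulLeft ℝ (V α))

/-- The Euler field `E = y^α ∂_{y^α}`. -/
def euler (n : ℕ) : Forms n →ₗ[ℝ] Forms n :=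
  ∑ α : Fin n, TensorProduct.map
    (LinearMap.mulLeft ℝ (MvPolynomial.X α) ∘ₗ (MvPolynomial.pderiv α).toLinearMap)
    LinearMap.id

/-- The Lie derivative `L_V = V^α ∂_{ξ^α} + (-1)^p Q(V^α) ∂_{y^α}` of a vector field of
Grassmann parity `p`. -/
def lieDer {n : ℕ} (p : ZMod 2) (V : Fin n → Lam n) : Forms n →ₗ[ℝ] Forms n :=
  (∑ α : Fin n, TensorProduct.map LinearMap.id (LinearMap.mulLeft ℝ (V α) ∘ₗ pd α)) +
  (-1 : ℝ) ^ p.val •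
    ∑ α : Fin n, ∑ β : Fin n, TensorProduct.map
      (LinearMap.mulLeft ℝ (MvPolynomial.X β) ∘ₗ (MvPolynomial.pderiv α).toLinearMap)
      (LinearMap.mulLeft ℝ (pd β (V α)))

section EulerAux
open MvPolynomial

lemma pderiv_comm' {n : ℕ} (i j : Fin n) (f : MvPolynomial (Fin n) ℝ) :
    pderiv i (pderiv j f) = pderiv j (pderiv i f) := by
  induction f using MvPolynomial.induction_on' with
  | monomial s a =>
    rcases eq_or_ne i j with rfl | h
    · rfl
    · simp only [pderiv_monomial]
      congr 1
      · rw [tsub_tsub, tsub_tsub, add_comm]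
      · rw [Finsupp.tsub_apply, Finsupp.tsub_apply, Finsupp.single_apply,
          Finsupp.single_apply, if_neg h, if_neg (Ne.symm h)]
        simp only [Nat.sub_zero]; ring
  | add f g hf hg => simp [map_add, hf, hg]

def Ep (n : ℕ) : MvPolynomial (Fin n) ℝ →ₗ[ℝ] MvPolynomial (Fin n) ℝ :=
  ∑ β : Fin n, LinearMap.mulLeft ℝ (MvPolynomial.X β) ∘ₗ (MvPolynomial.pderiv β).toLinearMap

lemma Ep_pd {n : ℕ} (α : Fin n) :
    Ep n ∘ₗ (pderiv α).toLinearMap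
      = (pderiv α).toLinearMap ∘ₗ Ep n - (pderiv α).toLinearMap := by
  classical
  apply LinearMap.ext; intro f
  simp only [LinearMap.sub_apply, LinearMap.comp_apply, Derivation.coeFn_coe]
  rw [eq_sub_iff_add_eq]
  simp only [Ep, LinearMap.sum_apply, LinearMap.comp_apply, Derivation.coeFn_coe,
    LinearMap.mulLeft_apply, map_sum, pderiv_mul, pderiv_X]
  rw [Finset.sum_add_distrib, add_comm]
  congr 1
  · simp [Pi.single_apply, ite_mul, Finset.sum_ite_eq']
  · exact Finset.sum_congr rfl fun β _ => by rw [pderiv_comm' α β]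

lemma Ep_mulX {n : ℕ} (γ : Fin n) :
    Ep n ∘ₗ LinearMap.mulLeft ℝ (X γ)
      = LinearMap.mulLeft ℝ (X γ) ∘ₗ Ep n + LinearMap.mulLeft ℝ (X γ) := by
  classical
  apply LinearMap.ext; intro f
  simp only [LinearMap.add_apply, LinearMap.comp_apply, LinearMap.mulLeft_apply, Ep,
    LinearMap.sum_apply, Derivation.coeFn_coe, map_sum, pderiv_mul, pderiv_X,
    Finset.mul_sum, mul_add]
  rw [Finset.sum_add_distrib, add_comm]
  congr 1
  · exact Finset.sum_congr rfl fun β _ => by ring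
  · simp [Pi.single_apply, mul_ite, ite_mul, Finset.sum_ite_eq]

lemma Ep_Xpd {n : ℕ} (γ α : Fin n) :
    Ep n ∘ₗ (LinearMap.mulLeft ℝ (X γ) ∘ₗ (pderiv α).toLinearMap)
      = (LinearMap.mulLeft ℝ (X γ) ∘ₗ (pderiv α).toLinearMap) ∘ₗ Ep n := by
  rw [← LinearMap.comp_assoc, Ep_mulX, LinearMap.add_comp, LinearMap.comp_assoc, Ep_pd,
    LinearMap.comp_sub, LinearMap.comp_assoc]
  abel

end EulerAux

lemma mapSumLeft {ι : Type*} (s : Finset ι) {M N P Q : Type*}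
    [AddCommGroup M] [AddCommGroup N] [AddCommGroup P] [AddCommGroup Q]
    [Module ℝ M] [Module ℝ N] [Module ℝ P] [Module ℝ Q]
    (f : ι → (M →ₗ[ℝ] P)) (g : N →ₗ[ℝ] Q) :
    TensorProduct.map (∑ i ∈ s, f i) g = ∑ i ∈ s, TensorProduct.map (f i) g := by
  simp [← TensorProduct.mapBilinear_apply, map_sum, LinearMap.sum_apply]

lemma compSum {ι : Type*} (s : Finset ι) {M N P : Type*}
    [AddCommGroup M] [AddCommGroup N] [AddCommGroup P]
    [Module ℝ M] [Module ℝ N] [Module ℝ P]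
    (g : N →ₗ[ℝ] P) (f : ι → (M →ₗ[ℝ] N)) :
    g ∘ₗ (∑ i ∈ s, f i) = ∑ i ∈ s, g ∘ₗ f i := by
  apply LinearMap.ext; intro x
  simp [LinearMap.sum_apply, map_sum]

lemma sumComp {ι : Type*} (s : Finset ι) {M N P : Type*}
    [AddCommGroup M] [AddCommGroup N] [AddCommGroup P]
    [Module ℝ M] [Module ℝ N] [Module ℝ P]
    (f : ι → (N →ₗ[ℝ] P)) (g : M →ₗ[ℝ] N) :
    (∑ i ∈ s, f i) ∘ₗ g = ∑ i ∈ s, f i ∘ₗ g := by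
  apply LinearMap.ext; intro x
  simp [LinearMap.sum_apply]

lemma mapSubLeft {M N P Q : Type*}
    [AddCommGroup M] [AddCommGroup N] [AddCommGroup P] [AddCommGroup Q]
    [Module ℝ M] [Module ℝ N] [Module ℝ P] [Module ℝ Q]
    (f f' : M →ₗ[ℝ] P) (g : N →ₗ[ℝ] Q) :
    TensorProduct.map (f - f') g = TensorProduct.map f g - TensorProduct.map f' g := by
  simp [← TensorProduct.mapBilinear_apply, map_sub, LinearMap.sub_apply]

/-- Commutation with the Euler field: for a vector field `V` of Grassmann parity `p`
(all components of element parity `p+1`), `[E, V^↑] = 0` and `[E, V_↑] = -V_↑`. -/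
theorem euler_comm_lifts (n : ℕ) (hn : 1 ≤ n) (p : ZMod 2) (V : Fin n → Lam n)
    (hV : ∀ α, V α ∈ CliffordAlgebra.evenOdd (0 : QuadraticForm ℝ (Fin n → ℝ)) (p + 1)) :
    euler n ∘ₗ lieDer p V - lieDer p V ∘ₗ euler n = 0 ∧
    euler n ∘ₗ innerProd V - innerProd V ∘ₗ euler n = -innerProd V := by
  classical
  have heuler : euler n = TensorProduct.map (Ep n) LinearMap.id := by
    rw [euler, Ep, mapSumLeft]
  have key : ∀ (A : MvPolynomial (Fin n) ℝ →ₗ[ℝ] MvPolynomial (Fin n) ℝ)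
      (B : Lam n →ₗ[ℝ] Lam n), Ep n ∘ₗ A = A ∘ₗ Ep n →
      euler n ∘ₗ TensorProduct.map A B = TensorProduct.map A B ∘ₗ euler n := by
    intro A B h
    rw [heuler, ← TensorProduct.map_comp, ← TensorProduct.map_comp, h,
      LinearMap.id_comp, LinearMap.comp_id]
  constructor
  · have h1 : euler n ∘ₗ
        (∑ α : Fin n, TensorProduct.map LinearMap.id (LinearMap.mulLeft ℝ (V α) ∘ₗ pd α))
        = (∑ α : Fin n, TensorProduct.map LinearMap.id (LinearMap.mulLeft ℝ (V α) ∘ₗ pd α))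
          ∘ₗ euler n := by
      rw [compSum, sumComp]
      exact Finset.sum_congr rfl fun α _ =>
        key _ _ (by rw [LinearMap.comp_id, LinearMap.id_comp])
    have h2 : euler n ∘ₗ
        (∑ α : Fin n, ∑ β : Fin n, TensorProduct.map
          (LinearMap.mulLeft ℝ (MvPolynomial.X β) ∘ₗ (MvPolynomial.pderiv α).toLinearMap)
          (LinearMap.mulLeft ℝ (pd β (V α))))
        = (∑ α : Fin n, ∑ β : Fin n, TensorProduct.map
          (LinearMap.mulLeft ℝ (MvPolynomial.X β) ∘ₗ (MvPolynomial.pderiv α).toLinearMap)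
          (LinearMap.mulLeft ℝ (pd β (V α)))) ∘ₗ euler n := by
      rw [compSum, sumComp]
      refine Finset.sum_congr rfl fun α _ => ?_
      rw [compSum, sumComp]
      exact Finset.sum_congr rfl fun β _ => key _ _ (Ep_Xpd β α)
    rw [lieDer, LinearMap.comp_add, LinearMap.add_comp, LinearMap.comp_smul,
      LinearMap.smul_comp, h1, h2]
    abel
  · have h3 : ∀ α : Fin n, euler n ∘ₗ
        TensorProduct.map (MvPolynomial.pderiv α).toLinearMap (LinearMap.mulLeft ℝ (V α))
        = TensorProduct.map (MvPolynomial.pderiv α).toLinearMap (LinearMap.mulLeft ℝ (V α))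
            ∘ₗ euler n
          - TensorProduct.map (MvPolynomial.pderiv α).toLinearMap
              (LinearMap.mulLeft ℝ (V α)) := by
      intro α
      have hB : TensorProduct.map
          ((MvPolynomial.pderiv α).toLinearMap ∘ₗ Ep n) (LinearMap.mulLeft ℝ (V α))
          = TensorProduct.map (MvPolynomial.pderiv α).toLinearMap (LinearMap.mulLeft ℝ (V α))
            ∘ₗ TensorProduct.map (Ep n) LinearMap.id := by
        rw [← TensorProduct.map_comp, LinearMap.comp_id]
      rw [heuler, ← TensorProduct.map_comp, LinearMap.id_comp, Ep_pd, mapSubLeft, hB]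
    rw [innerProd, compSum, sumComp,
      Finset.sum_congr rfl fun α _ => h3 α]
    apply LinearMap.ext; intro x
    simp only [LinearMap.sub_apply, LinearMap.sum_apply, LinearMap.neg_apply,
      LinearMap.comp_apply, Finset.sum_sub_distrib]
    abel
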